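/- arXiv:2111.10998 — 3 statements merged into one kernel-verified Lean document; each statement's English description precedes it below -/
import Mathlib

section
/- For every nonnegative integer m and positive integer n, ∫₀¹ x^{n-1} log^m(1-x) dx = (-1)^m · m! · ζₙ⋆(1_m)/n, where ζₙ⋆(1_m) = ∑_{n ≥ n₁ ≥ ⋯ ≥ n_m ≥ 1} 1/(n₁⋯n_m) is the multiple harmonic star sum with m ones. -/
open Finset

/-- Multiple harmonic star sum with `r` ones: `ζₙ⋆(1_r) = ∑_{n ≥ n₁ ≥ ⋯ ≥ n_r ≥ 1} 1/(n₁⋯n_r)`. -/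
noncomputable def zetastar1 : ℕ → ℕ → ℝ
  | 0, _ => 1
  | (r+1), n => ∑ j ∈ Finset.Icc 1 n, (1 / (j : ℝ)) * zetastar1 r j

open MeasureTheory intervalIntegral Real Set Filter


lemma intInt_pow_log (k j : ℕ) :
    IntervalIntegrable (fun x : ℝ => x ^ k * Real.log x ^ j) volume 0 1 := by
  have hmeas : AEStronglyMeasurable (fun x : ℝ => x ^ k * Real.log x ^ j)
      (volume.restrict (Set.Ioc (0:ℝ) 1)) :=
    ((measurable_id.pow_const k).mul (Real.measurable_log.pow_const j)).aestronglyMeasurable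
  have hg : IntervalIntegrable (fun x : ℝ => (j.factorial : ℝ) * 2 ^ j * x ^ (-(1:ℝ)/2)) volume 0 1 :=
    (intervalIntegrable_rpow' (by norm_num)).const_mul _
  rw [intervalIntegrable_iff_integrableOn_Ioc_of_le (by norm_num)] at hg ⊢
  refine hg.mono' hmeas ?_
  filter_upwards [ae_restrict_mem measurableSet_Ioc] with x hx
  have hx0 : 0 < x := hx.1
  have hx1 : x ≤ 1 := hx.2
  have hlog : Real.log x ≤ 0 := Real.log_nonpos hx0.le hx1
  have hnl : 0 ≤ -Real.log x := by linarith
  have habs : |Real.log x ^ j| = (-Real.log x) ^ j := by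
    rw [abs_pow, abs_of_nonpos hlog]
  have hxk : |x ^ k| ≤ 1 := by
    rw [abs_of_nonneg (pow_nonneg hx0.le k)]
    exact pow_le_one₀ hx0.le hx1
  have key : (-Real.log x) ^ j ≤ (j.factorial : ℝ) * 2 ^ j * x ^ (-(1:ℝ)/2) := by
    have h1 : x ^ (-(1:ℝ)/2) = Real.exp (-Real.log x / 2) := by
      rw [Real.rpow_def_of_pos hx0]
      congr 1
      ring
    rw [h1]
    have h2 := Real.pow_div_factorial_le_exp (x := -Real.log x / 2) (by positivity) j
    rw [div_pow, div_div] at h2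
    have hpos : (0:ℝ) < 2 ^ j * (j.factorial : ℝ) := by positivity
    rw [div_le_iff₀ hpos] at h2
    calc (-Real.log x) ^ j ≤ Real.exp (-Real.log x / 2) * (2 ^ j * (j.factorial : ℝ)) := h2
      _ = (j.factorial : ℝ) * 2 ^ j * Real.exp (-Real.log x / 2) := by ring
  have hb : ‖x ^ k * Real.log x ^ j‖ ≤ (-Real.log x) ^ j := by
    rw [Real.norm_eq_abs, abs_mul, habs]
    calc |x ^ k| * (-Real.log x) ^ j ≤ 1 * (-Real.log x) ^ j :=
          mul_le_mul_of_nonneg_right hxk (by positivity)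
      _ = (-Real.log x) ^ j := one_mul _
  exact hb.trans key
lemma tendsto_pow_mul_log_pow (k j : ℕ) :
    Tendsto (fun x : ℝ => x ^ (k+1) * Real.log x ^ (j+1)) (nhdsWithin 0 (Set.Ioi 0)) (nhds 0) := by
  have hr : (0:ℝ) < (k+1 : ℝ) / (j+1 : ℝ) := by positivity
  have h := (tendsto_log_mul_rpow_nhdsGT_zero hr).pow (j+1)
  rw [zero_pow (Nat.succ_ne_zero j)] at h
  refine h.congr' ?_
  filter_upwards [self_mem_nhdsWithin] with x (hx : 0 < x)
  rw [mul_pow, ← Real.rpow_natCast (x ^ ((k+1:ℝ)/(j+1:ℝ))) (j+1), ← Real.rpow_mul hx.le]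
  have : (k+1:ℝ)/(j+1:ℝ) * (j+1 : ℕ) = (k+1 : ℕ) := by
    push_cast
    field_simp
  rw [this, Real.rpow_natCast]
  ring

lemma J_eval (k m : ℕ) :
    ∫ x in (0:ℝ)..1, x ^ k * Real.log x ^ m = (-1) ^ m * (m.factorial : ℝ) / (k+1) ^ (m+1) := by
  induction m with
  | zero => simp [integral_pow]
  | succ m ih =>
    have hk : (0:ℝ) < (k:ℝ) + 1 := by positivity
    -- F x = x^(k+1)/(k+1) * log x ^ (m+1)
    set F : ℝ → ℝ := fun x => x ^ (k+1) / ((k:ℝ)+1) * Real.log x ^ (m+1) with hF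
    have hderiv : ∀ x ∈ Set.Ioo (0:ℝ) 1, HasDerivAt F
        (x ^ k * Real.log x ^ (m+1) + ((m+1 : ℝ)/((k:ℝ)+1)) * (x ^ k * Real.log x ^ m)) x := by
      intro x hx
      have hx0 : 0 < x := hx.1
      have h1 : HasDerivAt (fun x : ℝ => x ^ (k+1) / ((k:ℝ)+1)) (x ^ k) x := by
        have h := (hasDerivAt_pow (k+1) x).div_const ((k:ℝ)+1)
        refine h.congr_deriv ?_
        simp only [Nat.add_sub_cancel]
        push_cast
        field_simp
      have h2 : HasDerivAt (fun x : ℝ => Real.log x ^ (m+1))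
          ((m+1 : ℝ) * Real.log x ^ m * x⁻¹) x := by
        have := ((Real.hasDerivAt_log hx0.ne').pow (m+1))
        refine this.congr_deriv ?_
        simp [Nat.add_sub_cancel]
      have := h1.mul h2
      refine this.congr_deriv ?_
      field_simp
      ring
    have hint1 := intInt_pow_log k (m+1)
    have hint2 := (intInt_pow_log k m).const_mul ((m+1 : ℝ)/((k:ℝ)+1))
    have hint : IntervalIntegrable (fun x : ℝ =>
        x ^ k * Real.log x ^ (m+1) + ((m+1 : ℝ)/((k:ℝ)+1)) * (x ^ k * Real.log x ^ m))
        volume 0 1 := hint1.add hint2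
    have htend0 : Tendsto F (nhdsWithin 0 (Set.Ioi 0)) (nhds 0) := by
      have := (tendsto_pow_mul_log_pow k m).div_const ((k:ℝ)+1)
      rw [zero_div] at this
      refine this.congr fun x => ?_
      simp [hF]
      ring
    have htend1 : Tendsto F (nhdsWithin 1 (Set.Iio 1)) (nhds 0) := by
      have hc : ContinuousAt F 1 := by
        apply ContinuousAt.mul
        · exact (continuousAt_pow _ _).div_const _
        · exact (Real.continuousAt_log one_ne_zero).pow _
      have : F 1 = 0 := by simp [hF]
      rw [← this]
      exact hc.continuousWithinAt.tendsto
    have heq := intervalIntegral.integral_eq_sub_of_hasDerivAt_of_tendsto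
      (by norm_num : (0:ℝ) < 1) hderiv hint htend0 htend1
    rw [sub_zero] at heq
    rw [intervalIntegral.integral_add hint1 hint2, intervalIntegral.integral_const_mul, ih] at heq
    have : ∫ x in (0:ℝ)..1, x ^ k * Real.log x ^ (m+1)
        = -(((m+1 : ℝ)/((k:ℝ)+1)) * ((-1) ^ m * (m.factorial : ℝ) / ((k:ℝ)+1) ^ (m+1))) := by
      linarith
    rw [this]
    rw [pow_succ ((-1:ℝ)) m, Nat.factorial_succ]
    push_cast
    field_simp
    ring
noncomputable def T (m n : ℕ) : ℝ :=
  ∑ k ∈ range n, (-1:ℝ)^k * (n.choose (k+1) : ℝ) / ((k:ℝ)+1)^m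

lemma A_eq (m n : ℕ) :
    ∑ k ∈ range (n+1), (n.choose k : ℝ) * (-1:ℝ)^k / ((k:ℝ)+1)^(m+1)
      = T m (n+1) / ((n:ℝ)+1) := by
  rw [T, Finset.sum_div]
  refine Finset.sum_congr rfl fun k _ => ?_
  have hch : ((n:ℝ)+1) * (n.choose k : ℝ) = ((n+1).choose (k+1) : ℝ) * ((k:ℝ)+1) := by
    have := Nat.add_one_mul_choose_eq n k
    exact_mod_cast congrArg (Nat.cast : ℕ → ℝ) this
  have hk : ((k:ℝ)+1) ≠ 0 := by positivity
  have hn : ((n:ℝ)+1) ≠ 0 := by positivity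
  rw [pow_succ]
  field_simp
  linear_combination hch

lemma T_succ_succ (m n : ℕ) :
    T (m+1) (n+1) = T (m+1) n + T m (n+1) / ((n:ℝ)+1) := by
  rw [← A_eq]
  rw [show T (m+1) (n+1) = ∑ k ∈ range (n+1), (-1:ℝ)^k * ((n+1).choose (k+1) : ℝ) / ((k:ℝ)+1)^(m+1) from rfl]
  have step : ∀ k ∈ range (n+1), (-1:ℝ)^k * ((n+1).choose (k+1) : ℝ) / ((k:ℝ)+1)^(m+1)
      = (-1:ℝ)^k * (n.choose (k+1) : ℝ) / ((k:ℝ)+1)^(m+1)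
        + (n.choose k : ℝ) * (-1:ℝ)^k / ((k:ℝ)+1)^(m+1) := by
    intro k _
    have pascal : ((n+1).choose (k+1) : ℝ) = (n.choose k : ℝ) + (n.choose (k+1) : ℝ) := by
      exact_mod_cast congrArg (Nat.cast : ℕ → ℝ) (Nat.choose_succ_succ n k)
    rw [pascal]
    ring
  rw [Finset.sum_congr rfl step, Finset.sum_add_distrib]
  congr 1
  -- ∑_{k ∈ range (n+1)} (-1)^k C(n,k+1)/(k+1)^(m+1) = T (m+1) n : last term vanishes
  rw [Finset.sum_range_succ, Nat.choose_succ_self]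
  simp [T]

lemma T_zero (n : ℕ) (hn : 1 ≤ n) : T 0 n = 1 := by
  have h := add_pow (-1:ℝ) 1 n
  rw [neg_add_cancel, zero_pow (by omega : n ≠ 0)] at h
  rw [Finset.sum_range_succ'] at h
  simp only [one_pow, mul_one, pow_zero, Nat.choose_zero_right, Nat.cast_one, one_mul] at h
  have h2 : ∑ k ∈ range n, (-1:ℝ)^(k+1) * (n.choose (k+1) : ℝ) = -1 := by linarith
  rw [T]
  simp only [pow_zero, div_one]
  have : ∀ k ∈ range n, (-1:ℝ)^k * (n.choose (k+1) : ℝ)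
      = -((-1:ℝ)^(k+1) * (n.choose (k+1) : ℝ)) := by
    intro k _
    rw [pow_succ]
    ring
  rw [Finset.sum_congr rfl this, Finset.sum_neg_distrib]
  rw [h2]
  norm_num


lemma zetastar1_succ_n (r n : ℕ) :
    zetastar1 (r+1) (n+1) = zetastar1 (r+1) n + (1/((n:ℝ)+1)) * zetastar1 r (n+1) := by
  show (∑ j ∈ Finset.Icc 1 (n+1), (1 / (j : ℝ)) * zetastar1 r j) = _
  rw [Finset.sum_Icc_succ_top (by omega : 1 ≤ n+1)]
  push_cast
  rfl

lemma T_eq_zetastar1 : ∀ m n, 1 ≤ n → T m n = zetastar1 m n := by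
  intro m
  induction m with
  | zero =>
    intro n hn
    rw [T_zero n hn]
    rfl
  | succ r ih =>
    have main : ∀ n, T (r+1) n = zetastar1 (r+1) n := by
      intro n
      induction n with
      | zero => simp [T, zetastar1]
      | succ n ihn =>
        rw [T_succ_succ, ihn, zetastar1_succ_n, ih (n+1) (by omega)]
        ring
    intro n _
    exact main n

theorem integral_pow_mul_log_pow (m n : ℕ) (hn : 1 ≤ n) :
    ∫ x in (0:ℝ)..1, x ^ (n - 1) * (Real.log (1 - x)) ^ m =
      (-1) ^ m * (m.factorial : ℝ) * zetastar1 m n / n := by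
  obtain ⟨n, rfl⟩ : ∃ n', n = n' + 1 := ⟨n - 1, by omega⟩
  simp only [Nat.add_sub_cancel]
  have h := intervalIntegral.integral_comp_sub_left (a := (0:ℝ)) (b := 1)
    (fun u => (1-u)^n * Real.log u ^ m) 1
  simp only [sub_sub_cancel, sub_self, sub_zero] at h
  rw [h]
  have hexp : ∀ x : ℝ, (1-x)^n * Real.log x ^ m
      = ∑ k ∈ range (n+1), ((n.choose k : ℝ) * (-1:ℝ)^k) * (x^k * Real.log x ^ m) := by
    intro x
    have hb := add_pow (-x) 1 n
    have h1 : (1 - x) ^ n = ((-x) + 1)^n := by ring_nf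
    rw [h1, hb, Finset.sum_mul]
    refine Finset.sum_congr rfl fun k _ => ?_
    rw [neg_pow]
    ring
  rw [intervalIntegral.integral_congr (fun x _ => hexp x)]
  rw [intervalIntegral.integral_finset_sum
    (fun k _ => (intInt_pow_log k m).const_mul _)]
  have heval : ∀ k ∈ range (n+1),
      ∫ x in (0:ℝ)..1, ((n.choose k : ℝ) * (-1:ℝ)^k) * (x^k * Real.log x ^ m)
        = ((n.choose k : ℝ) * (-1:ℝ)^k) * ((-1)^m * (m.factorial : ℝ) / ((k:ℝ)+1)^(m+1)) := by
    intro k _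
    rw [intervalIntegral.integral_const_mul, J_eval]
  rw [Finset.sum_congr rfl heval]
  have hsum : ∑ k ∈ range (n+1),
      ((n.choose k : ℝ) * (-1:ℝ)^k) * ((-1)^m * (m.factorial : ℝ) / ((k:ℝ)+1)^(m+1))
      = ((-1)^m * (m.factorial : ℝ)) *
        ∑ k ∈ range (n+1), (n.choose k : ℝ) * (-1:ℝ)^k / ((k:ℝ)+1)^(m+1) := by
    rw [Finset.mul_sum]
    refine Finset.sum_congr rfl fun k _ => ?_
    ring
  rw [hsum, A_eq, T_eq_zetastar1 m (n+1) (by omega)]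
  push_cast
  ring
end

section
/- ∑_{n≥0} [C(2n,n)/4^n]² · 1/(n+1) = 4/π. -/
open Finset Real intervalIntegral MeasureTheory

noncomputable def auxc (n : ℕ) : ℝ := (Nat.choose (2 * n) n : ℝ) / 4 ^ n

lemma auxc_succ (n : ℕ) :
    auxc (n + 1) = auxc n * ((2 * n + 1) / (2 * n + 2)) := by
  have h := Nat.succ_mul_centralBinom_succ n
  have h' : ((n : ℝ) + 1) * (Nat.choose (2 * (n + 1)) (n + 1) : ℝ)
      = 2 * (2 * n + 1) * (Nat.choose (2 * n) n : ℝ) := by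
    exact_mod_cast congrArg (Nat.cast : ℕ → ℝ) h
  have hn : ((n : ℝ) + 1) ≠ 0 := by positivity
  have h4 : (4 : ℝ) ^ n ≠ 0 := by positivity
  unfold auxc
  rw [pow_succ]
  have key : (Nat.choose (2 * (n + 1)) (n + 1) : ℝ) * (2 * n + 2)
      = (Nat.choose (2 * n) n : ℝ) * (2 * n + 1) * 4 := by nlinarith [h']
  field_simp
  linear_combination key

lemma auxc_nonneg (n : ℕ) : 0 ≤ auxc n := by
  unfold auxc; positivity

lemma auxc_zero : auxc 0 = 1 := by simp [auxc]

lemma auxc_le_one (n : ℕ) : auxc n ≤ 1 := by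
  induction n with
  | zero => simp [auxc_zero]
  | succ k ih =>
    rw [auxc_succ]
    have h1 : (2 * (k : ℝ) + 1) / (2 * k + 2) ≤ 1 := by
      rw [div_le_one (by positivity)]; linarith
    calc auxc k * ((2 * (k:ℝ) + 1) / (2 * k + 2)) ≤ 1 * 1 :=
      mul_le_mul ih h1 (by positivity) one_pos.le
    _ = 1 := by ring

lemma prod_eq_auxc (n : ℕ) :
    ∏ i ∈ range n, ((2 * (i : ℝ) + 1) / (2 * i + 2)) = auxc n := by
  induction n with
  | zero => simp [auxc_zero]
  | succ k ih => rw [prod_range_succ, ih, auxc_succ]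

lemma int_sin_even (n : ℕ) :
    ∫ x in (0:ℝ)..Real.pi, Real.sin x ^ (2 * n) = Real.pi * auxc n := by
  rw [integral_sin_pow_even, prod_eq_auxc]

lemma int_sin_even_cos_sq (n : ℕ) :
    ∫ x in (0:ℝ)..Real.pi, Real.sin x ^ (2 * n) * Real.cos x ^ 2
      = Real.pi * auxc n / (2 * (n + 1)) := by
  have h1 : ∀ x : ℝ, Real.sin x ^ (2 * n) * Real.cos x ^ 2
      = Real.sin x ^ (2 * n) - Real.sin x ^ (2 * (n + 1)) := by
    intro x
    have := Real.sin_sq_add_cos_sq x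
    have h2 : Real.cos x ^ 2 = 1 - Real.sin x ^ 2 := by linarith
    rw [h2]; ring
  simp_rw [h1]
  rw [intervalIntegral.integral_sub ((by fun_prop : Continuous fun x => Real.sin x ^ (2 * n)).intervalIntegrable 0 Real.pi)
    ((by fun_prop : Continuous fun x => Real.sin x ^ (2 * (n + 1))).intervalIntegrable 0 Real.pi),
    int_sin_even, int_sin_even, auxc_succ]
  have hn : (2 * (n : ℝ) + 2) ≠ 0 := by positivity
  field_simp
  ring

lemma auxc_sq_bound (n : ℕ) : ((n : ℝ) + 1) * auxc n ^ 2 ≤ 1 := by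
  induction n with
  | zero => simp [auxc_zero]
  | succ k ih =>
    rw [auxc_succ]
    have hk : (0:ℝ) < 2 * k + 2 := by positivity
    have key : ((k : ℝ) + 1 + 1) * (auxc k * ((2 * k + 1) / (2 * k + 2))) ^ 2
        = (((k:ℝ) + 1) * auxc k ^ 2) * (((k:ℝ) + 2) * (2 * k + 1) ^ 2 / ((k + 1) * (2 * k + 2) ^ 2)) := by
      field_simp
      ring
    push_cast
    rw [key]
    have h2 : ((k:ℝ) + 2) * (2 * k + 1) ^ 2 / ((k + 1) * (2 * k + 2) ^ 2) ≤ 1 := by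
      rw [div_le_one (by positivity)]
      nlinarith [sq_nonneg (k:ℝ)]
    have h3 : (0:ℝ) ≤ ((k:ℝ) + 2) * (2 * k + 1) ^ 2 / ((k + 1) * (2 * k + 2) ^ 2) := by positivity
    nlinarith [mul_le_mul ih h2 h3 one_pos.le]

lemma summable_sq_inv : Summable (fun n : ℕ => 1 / ((n : ℝ) + 1) ^ 2) := by
  have h : Summable (fun n : ℕ => 1 / (n : ℝ) ^ 2) :=
    Real.summable_one_div_nat_pow.mpr one_lt_two
  have := (summable_nat_add_iff 1).mpr h
  simpa using this

lemma summable_terms : Summable (fun n : ℕ => auxc n ^ 2 / ((n : ℝ) + 1)) := by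
  refine Summable.of_nonneg_of_le (fun n => by positivity) (fun n => ?_) summable_sq_inv
  have h := auxc_sq_bound n
  have hn : (0:ℝ) < (n : ℝ) + 1 := by positivity
  rw [div_le_div_iff₀ hn (by positivity)]
  nlinarith [h]

lemma int_inv_one_sub_half (t : ℝ) (h0 : 0 ≤ t) (h1 : t < 1) :
    ∫ x in (0:ℝ)..(Real.pi/2), (1 - t * Real.sin x ^ 2)⁻¹
      = Real.pi / (2 * Real.sqrt (1 - t)) := by
  set s := Real.sqrt (1 - t) with hs_def
  have hs : 0 < s := Real.sqrt_pos.mpr (by linarith)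
  have hs2 : s ^ 2 = 1 - t := Real.sq_sqrt (by linarith)
  have hd : ∀ x : ℝ, 1 - t * Real.sin x ^ 2 ≠ 0 := by
    intro x
    have h2 : Real.sin x ^ 2 ≤ 1 := Real.sin_sq_le_one x
    have h3 : t * Real.sin x ^ 2 ≤ t * 1 := by
      apply mul_le_mul_of_nonneg_left h2 h0
    nlinarith
  have hf : Continuous fun x : ℝ => (1 - t * Real.sin x ^ 2)⁻¹ := by
    apply Continuous.inv₀ (by fun_prop) hd
  -- Step A : closed form for b < π/2
  have stepA : ∀ b ∈ Set.Ico (0:ℝ) (Real.pi/2),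
      (∫ x in (0:ℝ)..b, (1 - t * Real.sin x ^ 2)⁻¹)
        = s⁻¹ * Real.arctan (s * Real.tan b) := by
    intro b hb
    have hderiv : ∀ x ∈ Set.uIcc (0:ℝ) b,
        HasDerivAt (fun y => s⁻¹ * Real.arctan (s * Real.tan y))
          ((1 - t * Real.sin x ^ 2)⁻¹) x := by
      intro x hx
      rw [Set.uIcc_of_le hb.1] at hx
      have hx1 : 0 ≤ x := hx.1
      have hx2 : x < Real.pi / 2 := lt_of_le_of_lt hx.2 hb.2
      have hc : 0 < Real.cos x := Real.cos_pos_of_mem_Ioo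
        ⟨by linarith [Real.pi_pos], hx2⟩
      have hc' : Real.cos x ≠ 0 := ne_of_gt hc
      have h1' : HasDerivAt (fun y => s * Real.tan y) (s * (1 / Real.cos x ^ 2)) x :=
        (Real.hasDerivAt_tan hc').const_mul s
      have h2' : HasDerivAt (fun y => Real.arctan (s * Real.tan y))
          (1 / (1 + (s * Real.tan x) ^ 2) * (s * (1 / Real.cos x ^ 2))) x :=
        by have := (Real.hasDerivAt_arctan (s * Real.tan x)).comp x h1'; exact this
      have h3' := h2'.const_mul s⁻¹
      refine h3'.congr_deriv ?_
      have key : (1 + (s * Real.tan x) ^ 2) * Real.cos x ^ 2 = 1 - t * Real.sin x ^ 2 := by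
        rw [Real.tan_eq_sin_div_cos]
        field_simp
        nlinarith [Real.sin_sq_add_cos_sq x, hs2]
      have hne : (1 + (s * Real.tan x) ^ 2) ≠ 0 := by positivity
      rw [← key]
      field_simp
    rw [intervalIntegral.integral_eq_sub_of_hasDerivAt hderiv
      (hf.intervalIntegrable 0 b)]
    simp [Real.tan_zero, Real.arctan_zero]
  -- Step B : continuity of the primitive
  have hG : Continuous fun b => ∫ x in (0:ℝ)..b, (1 - t * Real.sin x ^ 2)⁻¹ :=
    intervalIntegral.continuous_primitive (fun a b => hf.intervalIntegrable a b) 0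
  -- Step C : limits
  have hlim1 : Filter.Tendsto (fun b => ∫ x in (0:ℝ)..b, (1 - t * Real.sin x ^ 2)⁻¹)
      (nhdsWithin (Real.pi/2) (Set.Iio (Real.pi/2)))
      (nhds (∫ x in (0:ℝ)..(Real.pi/2), (1 - t * Real.sin x ^ 2)⁻¹)) :=
    (hG.tendsto _).mono_left nhdsWithin_le_nhds
  have htan : Filter.Tendsto (fun b => s * Real.tan b)
      (nhdsWithin (Real.pi/2) (Set.Iio (Real.pi/2))) Filter.atTop :=
    Real.tendsto_tan_pi_div_two.const_mul_atTop hs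
  have harc : Filter.Tendsto (fun b => s⁻¹ * Real.arctan (s * Real.tan b))
      (nhdsWithin (Real.pi/2) (Set.Iio (Real.pi/2)))
      (nhds (s⁻¹ * (Real.pi/2))) := by
    apply Filter.Tendsto.const_mul
    exact (Real.tendsto_arctan_atTop.mono_right nhdsWithin_le_nhds).comp htan
  have heq : (fun b => ∫ x in (0:ℝ)..b, (1 - t * Real.sin x ^ 2)⁻¹)
      =ᶠ[nhdsWithin (Real.pi/2) (Set.Iio (Real.pi/2))]
      (fun b => s⁻¹ * Real.arctan (s * Real.tan b)) := by
    have hmem : Real.pi/2 ∈ Set.Ioc (0:ℝ) (Real.pi/2) :=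
      ⟨by linarith [Real.pi_pos], le_refl _⟩
    filter_upwards [Ico_mem_nhdsLT_of_mem hmem] with b hb
    exact stepA b hb
  have := tendsto_nhds_unique (hlim1.congr' heq) harc
  rw [this, inv_mul_eq_div, div_div]

lemma int_inv_one_sub (t : ℝ) (h0 : 0 ≤ t) (h1 : t < 1) :
    ∫ x in (0:ℝ)..Real.pi, (1 - t * Real.sin x ^ 2)⁻¹
      = Real.pi / Real.sqrt (1 - t) := by
  have hd : ∀ x : ℝ, 1 - t * Real.sin x ^ 2 ≠ 0 := by
    intro x
    have h2 : Real.sin x ^ 2 ≤ 1 := Real.sin_sq_le_one x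
    nlinarith [mul_le_mul_of_nonneg_left h2 h0]
  have hf : Continuous fun x : ℝ => (1 - t * Real.sin x ^ 2)⁻¹ :=
    Continuous.inv₀ (by fun_prop) hd
  have hsplit : (∫ x in (0:ℝ)..Real.pi, (1 - t * Real.sin x ^ 2)⁻¹)
      = (∫ x in (0:ℝ)..(Real.pi/2), (1 - t * Real.sin x ^ 2)⁻¹)
        + ∫ x in (Real.pi/2)..Real.pi, (1 - t * Real.sin x ^ 2)⁻¹ := by
    rw [intervalIntegral.integral_add_adjacent_intervals
      (hf.intervalIntegrable _ _) (hf.intervalIntegrable _ _)]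
  have hsym : (∫ x in (Real.pi/2)..Real.pi, (1 - t * Real.sin x ^ 2)⁻¹)
      = ∫ x in (0:ℝ)..(Real.pi/2), (1 - t * Real.sin x ^ 2)⁻¹ := by
    have := intervalIntegral.integral_comp_sub_left
      (a := (0:ℝ)) (b := Real.pi/2)
      (fun x => (1 - t * Real.sin x ^ 2)⁻¹) Real.pi
    rw [show Real.pi - Real.pi/2 = Real.pi/2 by ring, sub_zero] at this
    rw [← this]
    congr 1
    ext x
    rw [Real.sin_pi_sub]
  rw [hsplit, hsym, int_inv_one_sub_half t h0 h1]
  have hs : 0 < Real.sqrt (1 - t) := Real.sqrt_pos.mpr (by linarith)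
  field_simp
  ring

lemma binom_hasSum (t : ℝ) (h0 : 0 ≤ t) (h1 : t < 1) :
    HasSum (fun n : ℕ => auxc n * t ^ n) (1 / Real.sqrt (1 - t)) := by
  have hpi := Real.pi_pos
  set μ := MeasureTheory.volume.restrict (Set.Ioc (0:ℝ) Real.pi) with hμ
  have hFint : ∀ n : ℕ, MeasureTheory.Integrable
      (fun x : ℝ => t ^ n * Real.sin x ^ (2 * n)) μ := by
    intro n
    exact Continuous.integrableOn_Ioc (by fun_prop)
  have hFval : ∀ n : ℕ, (∫ x, t ^ n * Real.sin x ^ (2 * n) ∂μ)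
      = t ^ n * (Real.pi * auxc n) := by
    intro n
    rw [hμ, ← intervalIntegral.integral_of_le hpi.le,
      intervalIntegral.integral_const_mul, int_sin_even]
  have hFnonneg : ∀ (n : ℕ) (x : ℝ), 0 ≤ t ^ n * Real.sin x ^ (2 * n) := by
    intro n x
    have : (0:ℝ) ≤ Real.sin x ^ (2 * n) := by
      rw [pow_mul]; positivity
    positivity
  have hsum : Summable (fun n : ℕ => ∫ x, ‖t ^ n * Real.sin x ^ (2 * n)‖ ∂μ) := by
    apply Summable.of_nonneg_of_le (fun n => by positivity) (fun n => ?_)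
      ((summable_geometric_of_lt_one h0 h1).mul_right Real.pi)
    have : (∫ x, ‖t ^ n * Real.sin x ^ (2 * n)‖ ∂μ)
        = t ^ n * (Real.pi * auxc n) := by
      rw [← hFval n]
      congr 1
      ext x
      rw [Real.norm_eq_abs, abs_of_nonneg (hFnonneg n x)]
    rw [this]
    have h2 : auxc n ≤ 1 := auxc_le_one n
    have h3 : (0:ℝ) ≤ t ^ n := by positivity
    nlinarith [auxc_nonneg n, mul_le_mul_of_nonneg_left
      (mul_le_mul_of_nonneg_left h2 hpi.le) h3]
  have key := MeasureTheory.hasSum_integral_of_summable_integral_norm hFint hsum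
  have htsum : ∀ x : ℝ, (∑' n : ℕ, t ^ n * Real.sin x ^ (2 * n))
      = (1 - t * Real.sin x ^ 2)⁻¹ := by
    intro x
    have hlt : t * Real.sin x ^ 2 < 1 := by
      nlinarith [Real.sin_sq_le_one x, mul_le_mul_of_nonneg_left (Real.sin_sq_le_one x) h0]
    have hge : 0 ≤ t * Real.sin x ^ 2 := by positivity
    have hgeo := hasSum_geometric_of_lt_one hge hlt
    have heqf : (fun n : ℕ => (t * Real.sin x ^ 2) ^ n)
        = fun n : ℕ => t ^ n * Real.sin x ^ (2 * n) := by
      ext n; rw [mul_pow, pow_mul]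
    rw [heqf] at hgeo
    exact hgeo.tsum_eq
  have hival : (∫ x, (∑' n : ℕ, t ^ n * Real.sin x ^ (2 * n)) ∂μ)
      = Real.pi / Real.sqrt (1 - t) := by
    simp_rw [htsum]
    rw [hμ, ← intervalIntegral.integral_of_le hpi.le, int_inv_one_sub t h0 h1]
  rw [hival] at key
  simp_rw [hFval] at key
  have key2 := key.div_const Real.pi
  have heq2 : (fun n : ℕ => t ^ n * (Real.pi * auxc n) / Real.pi)
      = fun n : ℕ => auxc n * t ^ n := by
    ext n; field_simp
  rw [heq2] at key2
  have : Real.pi / Real.sqrt (1 - t) / Real.pi = 1 / Real.sqrt (1 - t) := by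
    rw [div_right_comm, div_self hpi.ne']
  rwa [this] at key2

lemma int_abs_cos : ∫ x in (0:ℝ)..Real.pi, |Real.cos x| = 2 := by
  have hpi := Real.pi_pos
  have h1 : (∫ x in (0:ℝ)..(Real.pi/2), |Real.cos x|)
      = ∫ x in (0:ℝ)..(Real.pi/2), Real.cos x := by
    apply intervalIntegral.integral_congr
    intro x hx
    rw [Set.uIcc_of_le (by linarith)] at hx
    exact abs_of_nonneg (Real.cos_nonneg_of_mem_Icc ⟨by linarith [hx.1], hx.2⟩)
  have h2 : (∫ x in (Real.pi/2)..Real.pi, |Real.cos x|)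
      = ∫ x in (Real.pi/2)..Real.pi, -Real.cos x := by
    apply intervalIntegral.integral_congr
    intro x hx
    rw [Set.uIcc_of_le (by linarith)] at hx
    exact abs_of_nonpos (Real.cos_nonpos_of_pi_div_two_le_of_le hx.1 (by linarith [hx.2]))
  have hc : Continuous fun x : ℝ => |Real.cos x| := Real.continuous_cos.abs
  rw [← intervalIntegral.integral_add_adjacent_intervals
    (hc.intervalIntegrable 0 (Real.pi/2)) (hc.intervalIntegrable (Real.pi/2) Real.pi),
    h1, h2, integral_cos, intervalIntegral.integral_neg, integral_cos]
  simp
  norm_num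

theorem apery_sq_inv_succ :
    HasSum (fun n : ℕ => ((Nat.choose (2 * n) n : ℝ) / 4 ^ n) ^ 2 * (1 / ((n : ℝ) + 1)))
      (4 / Real.pi) := by
  have hpi := Real.pi_pos
  set μ := MeasureTheory.volume.restrict (Set.Ioc (0:ℝ) Real.pi) with hμ
  set F : ℕ → ℝ → ℝ := fun n x => auxc n * (Real.sin x ^ (2 * n) * Real.cos x ^ 2) with hF
  have hFnonneg : ∀ (n : ℕ) (x : ℝ), 0 ≤ F n x := by
    intro n x
    have h : (0:ℝ) ≤ Real.sin x ^ (2 * n) := by rw [pow_mul]; positivity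
    have := auxc_nonneg n
    positivity
  have hFint : ∀ n : ℕ, MeasureTheory.Integrable (F n) μ := by
    intro n
    exact Continuous.integrableOn_Ioc (by fun_prop)
  have hFval : ∀ n : ℕ, (∫ x, F n x ∂μ)
      = Real.pi / 2 * (auxc n ^ 2 / ((n : ℝ) + 1)) := by
    intro n
    rw [hμ, ← intervalIntegral.integral_of_le hpi.le]
    simp_rw [hF]
    rw [intervalIntegral.integral_const_mul, int_sin_even_cos_sq]
    have hn : ((n:ℝ) + 1) ≠ 0 := by positivity
    field_simp
  have hsum : Summable (fun n : ℕ => ∫ x, ‖F n x‖ ∂μ) := by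
    have heq : (fun n : ℕ => ∫ x, ‖F n x‖ ∂μ)
        = fun n : ℕ => Real.pi / 2 * (auxc n ^ 2 / ((n : ℝ) + 1)) := by
      ext n
      rw [← hFval n]
      congr 1
      ext x
      rw [Real.norm_eq_abs, abs_of_nonneg (hFnonneg n x)]
    rw [heq]
    exact summable_terms.mul_left _
  have key := MeasureTheory.hasSum_integral_of_summable_integral_norm hFint hsum
  have htsum : ∀ x : ℝ, (∑' n : ℕ, F n x) = |Real.cos x| := by
    intro x
    by_cases hc : Real.cos x = 0
    · have : ∀ n : ℕ, F n x = 0 := by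
        intro n; simp [hF, hc]
      rw [tsum_congr fun n => this n]
      simp [hc]
    · have hsc := Real.sin_sq_add_cos_sq x
      have h0 : (0:ℝ) ≤ Real.sin x ^ 2 := by positivity
      have h1 : Real.sin x ^ 2 < 1 := by
        have : 0 < Real.cos x ^ 2 := by positivity
        linarith
      have hbs := (binom_hasSum (Real.sin x ^ 2) h0 h1).mul_right (Real.cos x ^ 2)
      have heqf : (fun n : ℕ => auxc n * (Real.sin x ^ 2) ^ n * Real.cos x ^ 2)
          = fun n : ℕ => F n x := by
        ext n
        rw [hF, ← pow_mul]
        ring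
      rw [heqf] at hbs
      have hval : 1 / Real.sqrt (1 - Real.sin x ^ 2) * Real.cos x ^ 2 = |Real.cos x| := by
        have h2 : 1 - Real.sin x ^ 2 = Real.cos x ^ 2 := by linarith
        rw [h2, Real.sqrt_sq_eq_abs]
        have h3 : Real.cos x ^ 2 = |Real.cos x| ^ 2 := (sq_abs _).symm
        rw [h3]
        have h4 : |Real.cos x| ≠ 0 := abs_ne_zero.mpr hc
        field_simp
      rw [hval] at hbs
      exact hbs.tsum_eq
  have hival : (∫ x, (∑' n : ℕ, F n x) ∂μ) = 2 := by
    simp_rw [htsum]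
    rw [hμ, ← intervalIntegral.integral_of_le hpi.le, int_abs_cos]
  rw [hival] at key
  simp_rw [hFval] at key
  have key2 := key.mul_left (2 / Real.pi)
  have heq2 : (fun n : ℕ => 2 / Real.pi * (Real.pi / 2 * (auxc n ^ 2 / ((n : ℝ) + 1))))
      = fun n : ℕ => ((Nat.choose (2 * n) n : ℝ) / 4 ^ n) ^ 2 * (1 / ((n : ℝ) + 1)) := by
    ext n
    have hn : ((n:ℝ) + 1) ≠ 0 := by positivity
    rw [show ((Nat.choose (2 * n) n : ℝ) / 4 ^ n) = auxc n from rfl]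
    field_simp
  rw [heq2] at key2
  have : 2 / Real.pi * 2 = 4 / Real.pi := by ring
  rwa [this] at key2
end

section
/- ∑_{n≥0} [C(2n,n)/4^n]² · 1/(n+1)² = 16/π - 4. -/
open Finset
open Real

noncomputable def bb (n : ℕ) : ℝ := (Nat.choose (2 * n) n : ℝ) / 4 ^ n
noncomputable def aa (n : ℕ) : ℝ := bb n / (n + 1)

lemma bb_nonneg (n : ℕ) : 0 ≤ bb n := by unfold bb; positivity
lemma aa_nonneg (n : ℕ) : 0 ≤ aa n := by unfold aa bb; positivity

lemma bb_succ (n : ℕ) : bb (n + 1) = bb n * (2 * n + 1) / (2 * n + 2) := by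
  have h := Nat.succ_mul_centralBinom_succ n
  simp only [Nat.centralBinom] at h
  have h' : ((n : ℝ) + 1) * (Nat.choose (2 * (n + 1)) (n + 1) : ℝ)
      = 2 * (2 * n + 1) * (Nat.choose (2 * n) n : ℝ) := by
    exact_mod_cast congrArg (Nat.cast : ℕ → ℝ) h
  unfold bb
  have hn : ((n : ℝ) + 1) ≠ 0 := by positivity
  field_simp
  linear_combination 2 * (4:ℝ)^n * h'

lemma aa_eq (n : ℕ) : aa n = 2 * (bb n - bb (n + 1)) := by
  rw [bb_succ]; unfold aa
  have hn : ((n : ℝ) + 1) ≠ 0 := by positivity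
  field_simp; ring

lemma sum_aa (N : ℕ) : ∑ n ∈ range N, aa n = 2 - 2 * bb N := by
  induction N with
  | zero => simp [bb]
  | succ k ih => rw [sum_range_succ, ih, aa_eq]; ring

lemma aa_cat (n : ℕ) : aa n = (catalan n : ℝ) / 4 ^ n := by
  have h := succ_mul_catalan_eq_centralBinom n
  simp only [Nat.centralBinom] at h
  have h' : ((n : ℝ) + 1) * (catalan n : ℝ) = (Nat.choose (2 * n) n : ℝ) := by
    exact_mod_cast congrArg (Nat.cast : ℕ → ℝ) h
  unfold aa bb
  have hn : ((n : ℝ) + 1) ≠ 0 := by positivity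
  field_simp
  linear_combination (-1:ℝ) * h'

lemma summable_aux {x : ℝ} (h0 : 0 ≤ x) (h1 : x ≤ 1) : Summable (fun n => aa n * x ^ n) := by
  apply summable_of_sum_range_le (c := 2) (fun n => mul_nonneg (aa_nonneg n) (pow_nonneg h0 n))
  intro N
  calc ∑ n ∈ range N, aa n * x ^ n ≤ ∑ n ∈ range N, aa n := by
        apply sum_le_sum
        intro i _
        have : x ^ i ≤ 1 := pow_le_one₀ h0 h1
        nlinarith [aa_nonneg i]
    _ = 2 - 2 * bb N := sum_aa N
    _ ≤ 2 := by nlinarith [bb_nonneg N]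

lemma tsum_aux_le {x : ℝ} (h0 : 0 ≤ x) (h1 : x ≤ 1) : (∑' n, aa n * x ^ n) ≤ 2 := by
  apply (summable_aux h0 h1).tsum_le_of_sum_range_le
  intro N
  calc ∑ n ∈ range N, aa n * x ^ n ≤ ∑ n ∈ range N, aa n := by
        apply sum_le_sum
        intro i _
        have : x ^ i ≤ 1 := pow_le_one₀ h0 h1
        nlinarith [aa_nonneg i]
    _ = 2 - 2 * bb N := sum_aa N
    _ ≤ 2 := by nlinarith [bb_nonneg N]

lemma cauchy_term {x : ℝ} (n : ℕ) :
    ∑ k ∈ range (n + 1), (aa k * x ^ k) * (aa (n - k) * x ^ (n - k))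
      = 4 * aa (n + 1) * x ^ n := by
  have key : ∀ k ∈ range (n + 1), (aa k * x ^ k) * (aa (n - k) * x ^ (n - k))
      = ((catalan k * catalan (n - k) : ℕ) : ℝ) * (x ^ n / 4 ^ n) := by
    intro k hk
    have hkn : k ≤ n := Nat.lt_succ_iff.mp (mem_range.mp hk)
    have e1 : x ^ k * x ^ (n - k) = x ^ n := by rw [← pow_add, Nat.add_sub_cancel' hkn]
    have e2 : (4:ℝ) ^ k * 4 ^ (n - k) = 4 ^ n := by rw [← pow_add, Nat.add_sub_cancel' hkn]
    rw [aa_cat, aa_cat]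
    push_cast
    field_simp
    rw [← e1, ← e2]
    ring
  rw [sum_congr rfl key, ← sum_mul, ← Nat.cast_sum]
  have hcat : ∑ k ∈ range (n + 1), catalan k * catalan (n - k) = catalan (n + 1) := by
    rw [catalan_succ']
    exact (Nat.sum_antidiagonal_eq_sum_range_succ (fun x y => catalan x * catalan y) n).symm
  rw [hcat, aa_cat]
  push_cast
  rw [pow_succ]
  field_simp

lemma gen_fun {x : ℝ} (h0 : 0 < x) (h1 : x < 1) :
    HasSum (fun n => aa n * x ^ n) (2 / (1 + Real.sqrt (1 - x))) := by
  have h0' : (0:ℝ) ≤ x := h0.le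
  have h1' : x ≤ 1 := h1.le
  have hx : x ≠ 0 := ne_of_gt h0
  have hs := summable_aux h0' h1'
  set g := ∑' n, aa n * x ^ n with hg
  have hgs : HasSum (fun n => aa n * x ^ n) g := hs.hasSum
  have hnorm : Summable (fun n => ‖aa n * x ^ n‖) := by
    apply hs.congr
    intro n
    rw [Real.norm_eq_abs, abs_of_nonneg (mul_nonneg (aa_nonneg n) (pow_nonneg h0' n))]
  have hc : g * g = ∑' n, 4 * aa (n + 1) * x ^ n := by
    rw [hg, tsum_mul_tsum_eq_tsum_sum_range_of_summable_norm hnorm hnorm]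
    exact tsum_congr fun n => cauchy_term n
  have h1s : HasSum (fun n => aa (n + 1) * x ^ (n + 1)) (g - 1) := by
    rw [hasSum_nat_add_iff (f := fun n => aa n * x ^ n) 1]
    simpa [aa, bb] using hgs
  have h2s : HasSum (fun n => 4 * aa (n + 1) * x ^ n) (4 / x * (g - 1)) := by
    have h := h1s.mul_left (4 / x)
    have e : (fun n => 4 * aa (n + 1) * x ^ n)
        = fun n => 4 / x * (aa (n + 1) * x ^ (n + 1)) := by
      funext n; field_simp; ring
    rw [e]; exact h
  have heq : x * (g * g) = 4 * g - 4 := by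
    rw [hc, h2s.tsum_eq]; field_simp
  have hgle : g ≤ 2 := tsum_aux_le h0' h1'
  have hgnn : 0 ≤ g := tsum_nonneg fun n => mul_nonneg (aa_nonneg n) (pow_nonneg h0' n)
  have hle2 : x * g ≤ 2 := by nlinarith
  have hsqrt : Real.sqrt (1 - x) = (2 - x * g) / 2 := by
    rw [show (1:ℝ) - x = ((2 - x * g) / 2) ^ 2 by linear_combination (-(x:ℝ)/4) * heq]
    exact Real.sqrt_sq (by linarith)
  have hval : 2 / (1 + Real.sqrt (1 - x)) = g := by
    rw [hsqrt, div_eq_iff (by nlinarith : (1:ℝ) + (2 - x * g) / 2 ≠ 0)]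
    linear_combination (1/2 : ℝ) * heq
  rw [hval]; exact hgs

lemma wallis (n : ℕ) : ∫ t in (0:ℝ)..(π/2), sin t ^ (2 * n) = π / 2 * bb n := by
  induction n with
  | zero => simp [bb]
  | succ k ih =>
    have h := integral_sin_pow (a := 0) (b := π/2) (2 * k)
    rw [show 2 * (k + 1) = 2 * k + 2 by ring, h, ih, bb_succ]
    simp [Real.cos_pi_div_two]
    push_cast
    have : (2 * (k:ℝ) + 2) ≠ 0 := by positivity
    field_simp

lemma Jint (n : ℕ) : ∫ t in (0:ℝ)..(π/2), (sin t ^ 2) ^ n * cos t ^ 2 = π / 4 * aa n := by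
  have congr1 : ∀ t, (sin t ^ 2) ^ n * cos t ^ 2 = sin t ^ (2 * n) - sin t ^ (2 * (n + 1)) := by
    intro t
    have := sin_sq_add_cos_sq t
    have hc : cos t ^ 2 = 1 - sin t ^ 2 := by linarith
    rw [hc]
    ring
  rw [intervalIntegral.integral_congr (fun t _ => congr1 t)]
  rw [intervalIntegral.integral_sub (f := fun x => sin x ^ (2 * n)) (g := fun x => sin x ^ (2 * (n + 1))) ((continuous_sin.pow _).intervalIntegrable _ _)
      ((continuous_sin.pow _).intervalIntegrable _ _), wallis, wallis, aa_eq]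
  ring

lemma intG : ∫ t in (0:ℝ)..(π/2), 2 / (1 + cos t) * cos t ^ 2 = 4 - π := by
  have hderiv : ∀ t ∈ Set.uIcc (0:ℝ) (π/2),
      HasDerivAt (fun u => 2 * (sin u - u + tan (u / 2)))
        (2 / (1 + cos t) * cos t ^ 2) t := by
    intro t ht
    rw [Set.uIcc_of_le (by positivity : (0:ℝ) ≤ π/2)] at ht
    obtain ⟨ht0, ht1⟩ := ht
    have hcos2 : 0 < cos (t / 2) := by
      apply Real.cos_pos_of_mem_Ioo
      constructor <;> nlinarith [Real.pi_pos]
    have hcost : 0 ≤ cos t := Real.cos_nonneg_of_mem_Icc ⟨by linarith [Real.pi_pos], ht1⟩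
    have htan : HasDerivAt (fun u : ℝ => tan (u / 2)) (1 / cos (t / 2) ^ 2 * (1 / 2)) t := by
      have h1 : HasDerivAt (fun u : ℝ => u / 2) (1 / 2) t := by
        simpa using (hasDerivAt_id t).div_const 2
      exact (Real.hasDerivAt_tan hcos2.ne').comp t h1
    have hsin : HasDerivAt Real.sin (cos t) t := Real.hasDerivAt_sin t
    have hid : HasDerivAt (fun u : ℝ => u) 1 t := hasDerivAt_id t
    have := (((hsin.sub hid).add htan).const_mul 2)
    refine this.congr_deriv ?_
    have hhalf : cos (t / 2) ^ 2 = (1 + cos t) / 2 := by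
      have := Real.cos_sq (t / 2)
      rw [show 2 * (t / 2) = t by ring] at this
      linarith
    rw [hhalf]
    have h1c : (0:ℝ) < 1 + cos t := by linarith
    field_simp
    ring
  have hint : IntervalIntegrable (fun t => 2 / (1 + cos t) * cos t ^ 2)
      MeasureTheory.volume 0 (π/2) := by
    apply ContinuousOn.intervalIntegrable
    apply ContinuousOn.mul
    · apply ContinuousOn.div continuousOn_const
        (continuousOn_const.add Real.continuous_cos.continuousOn)
      intro t ht
      rw [Set.uIcc_of_le (by positivity : (0:ℝ) ≤ π/2)] at ht
      have : 0 ≤ cos t := Real.cos_nonneg_of_mem_Icc ⟨by linarith [Real.pi_pos, ht.1], ht.2⟩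
      intro h; change 1 + cos t = 0 at h; nlinarith
    · exact (Real.continuous_cos.pow 2).continuousOn
  rw [intervalIntegral.integral_eq_sub_of_hasDerivAt hderiv hint]
  rw [show π / 2 / 2 = π / 4 by ring]
  simp [Real.tan_pi_div_four]
  ring

lemma Gintegrable : IntervalIntegrable (fun t => 2 / (1 + cos t) * cos t ^ 2)
    MeasureTheory.volume 0 (π/2) := by
  apply ContinuousOn.intervalIntegrable
  apply ContinuousOn.mul
  · apply ContinuousOn.div continuousOn_const
      (continuousOn_const.add Real.continuous_cos.continuousOn)
    intro t ht
    rw [Set.uIcc_of_le (by positivity : (0:ℝ) ≤ π/2)] at ht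
    have : 0 ≤ cos t := Real.cos_nonneg_of_mem_Icc ⟨by linarith [Real.pi_pos, ht.1], ht.2⟩
    intro h; change 1 + cos t = 0 at h; nlinarith
  · exact (Real.continuous_cos.pow 2).continuousOn

lemma hasSumG : ∀ t ∈ Set.Ioc (0:ℝ) (π/2),
    HasSum (fun n => aa n * (sin t ^ 2) ^ n * cos t ^ 2) (2 / (1 + cos t) * cos t ^ 2) := by
  intro t ⟨ht0, ht1⟩
  rcases eq_or_lt_of_le ht1 with heq | hlt
  · have hc : cos t = 0 := by rw [heq, Real.cos_pi_div_two]
    have : (fun n => aa n * (sin t ^ 2) ^ n * cos t ^ 2) = fun _ => (0:ℝ) := by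
      funext n; rw [hc]; ring
    rw [this, hc]
    simpa using hasSum_zero
  · have hcpos : 0 < cos t := Real.cos_pos_of_mem_Ioo ⟨by linarith [Real.pi_pos], hlt⟩
    have hspos : 0 < sin t := Real.sin_pos_of_pos_of_lt_pi ht0 (by linarith [Real.pi_pos])
    have hsq : sin t ^ 2 + cos t ^ 2 = 1 := Real.sin_sq_add_cos_sq t
    have hx0 : 0 < sin t ^ 2 := by positivity
    have hx1 : sin t ^ 2 < 1 := by nlinarith
    have h := (gen_fun hx0 hx1).mul_right (cos t ^ 2)
    have hsqrt : Real.sqrt (1 - sin t ^ 2) = cos t := by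
      rw [show 1 - sin t ^ 2 = cos t ^ 2 by linarith, Real.sqrt_sq hcpos.le]
    rw [hsqrt] at h
    exact h

theorem apery_sq_inv_succ_sq :
    HasSum (fun n : ℕ => ((Nat.choose (2 * n) n : ℝ) / 4 ^ n) ^ 2 * (1 / ((n : ℝ) + 1) ^ 2))
      (16 / Real.pi - 4) := by
  have h2 : (0:ℝ) ≤ π/2 := by positivity
  have hΙ : Set.uIoc (0:ℝ) (π/2) = Set.Ioc 0 (π/2) := Set.uIoc_of_le (by positivity)
  have key : HasSum (fun n => ∫ t in (0:ℝ)..(π/2), aa n * (sin t ^ 2) ^ n * cos t ^ 2)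
      (∫ t in (0:ℝ)..(π/2), 2 / (1 + cos t) * cos t ^ 2) := by
    apply intervalIntegral.hasSum_integral_of_dominated_convergence
      (bound := fun n t => aa n * (sin t ^ 2) ^ n * cos t ^ 2)
    · intro n
      exact Continuous.aestronglyMeasurable (by fun_prop)
    · intro n
      apply Filter.Eventually.of_forall
      intro t _
      rw [Real.norm_eq_abs, abs_of_nonneg (mul_nonneg
        (mul_nonneg (aa_nonneg n) (pow_nonneg (sq_nonneg _) n)) (sq_nonneg _))]
    · apply Filter.Eventually.of_forall
      intro t _
      exact (summable_aux (sq_nonneg _) (Real.sin_sq_le_one t)).mul_right _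
    · rw [intervalIntegrable_iff, hΙ]
      have hGon : MeasureTheory.IntegrableOn (fun t => 2 / (1 + cos t) * cos t ^ 2)
          (Set.Ioc 0 (π/2)) MeasureTheory.volume := by
        have := Gintegrable
        rw [intervalIntegrable_iff, hΙ] at this
        exact this
      apply hGon.congr_fun _ measurableSet_Ioc
      intro t ht
      exact ((hasSumG t ht).tsum_eq).symm
    · apply Filter.Eventually.of_forall
      intro t ht
      exact hasSumG t (by rwa [hΙ] at ht)
  have e1 : ∀ n, (∫ t in (0:ℝ)..(π/2), aa n * (sin t ^ 2) ^ n * cos t ^ 2)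
      = π / 4 * aa n ^ 2 := by
    intro n
    rw [intervalIntegral.integral_congr
        (g := fun t => aa n * ((sin t ^ 2) ^ n * cos t ^ 2)) (fun t _ => by ring),
      intervalIntegral.integral_const_mul, Jint]
    ring
  simp only [e1, intG] at key
  have hπ := Real.pi_pos
  have final := key.mul_left (4/π)
  have e2 : ∀ n : ℕ, ((Nat.choose (2 * n) n : ℝ) / 4 ^ n) ^ 2 * (1 / ((n : ℝ) + 1) ^ 2)
      = 4 / π * (π / 4 * aa n ^ 2) := by
    intro n
    unfold aa bb
    have hn : ((n:ℝ) + 1) ≠ 0 := by positivity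
    field_simp
  rw [show (16 / Real.pi - 4 : ℝ) = 4 / π * (4 - π) by field_simp; ring]
  simp only [e2]
  exact final
end
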